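/- The generalized Kantorovich constant satisfies the symmetry K(1/x, t) = K(x, t) for all x > 0, x ≠ 1, and all real t ∉ {0,1}. -/

import Mathlib

lemma same_sign {a b : ℝ} (ha : a ≠ 0) (hb : b ≠ 0) (h : 0 < a ↔ 0 < b) : 0 < a * b := by
  rcases hb.lt_or_gt with h' | h'
  · have ha' : a < 0 := by
      by_contra hc; push_neg at hc
      exact absurd (h.mp (hc.lt_of_ne' ha)) (by linarith)
    exact mul_pos_of_neg_of_neg ha' h'
  · exact mul_pos (h.mpr h') h'

/-- The generalized Kantorovich constant. -/
noncomputable def K (x t : ℝ) : ℝ :=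
  ((x ^ t - x) / ((t - 1) * (x - 1))) * (((t - 1) / t) * ((x ^ t - 1) / (x ^ t - x))) ^ t

theorem K_inv_symm (x t : ℝ) (hx : 0 < x) (hx1 : x ≠ 1) (ht0 : t ≠ 0) (ht1 : t ≠ 1) :
    K (1 / x) t = K x t := by
  have hx0 : x ≠ 0 := hx.ne'
  have hL : Real.log x ≠ 0 := Real.log_ne_zero_of_pos_of_ne_one hx hx1
  set L := Real.log x with hLdef
  set y := x ^ t with hydef
  have hy : 0 < y := Real.rpow_pos_of_pos hx t
  have hylog : Real.log y = t * L := Real.log_rpow hx t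
  have ht1' : t - 1 ≠ 0 := sub_ne_zero.mpr ht1
  have hy1 : y ≠ 1 := by
    intro h
    apply ht0
    have : t * L = 0 := by rw [← hylog, h, Real.log_one]
    exact (mul_eq_zero.mp this).resolve_right hL
  have hyx : y ≠ x := by
    intro h
    apply ht1'
    have h2 : t * L = L := by rw [← hylog, h]
    have : (t - 1) * L = 0 := by linarith [h2]
    exact (mul_eq_zero.mp this).resolve_right hL
  have hs1 : 0 < y - 1 ↔ 0 < t * L := by
    rw [sub_pos, ← hylog]; exact (Real.log_pos_iff hy.le).symm
  have hs2 : 0 < y - x ↔ 0 < (t - 1) * L := by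
    rw [sub_pos]
    constructor
    · intro h
      have := (Real.log_lt_log_iff hx hy).mpr h
      rw [hylog] at this; nlinarith
    · intro h
      have : L < t * L := by nlinarith
      rw [← hylog] at this
      exact (Real.log_lt_log_iff hx hy).mp this
  -- positivity of the base
  have hA : 0 < (y - 1) * (t * L) := same_sign (sub_ne_zero.mpr hy1) (mul_ne_zero ht0 hL) hs1
  have hA2 : 0 < (y - x) * ((t - 1) * L) := same_sign (sub_ne_zero.mpr hyx) (mul_ne_zero ht1' hL) hs2
  have hB : 0 < (t - 1) / t * ((y - 1) / (y - x)) := by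
    have hprod : 0 < ((t - 1) * (y - 1)) * (t * (y - x)) := by nlinarith [mul_pos hA hA2, sq_nonneg L, sq_abs L]
    have heq : (t - 1) / t * ((y - 1) / (y - x)) = ((t - 1) * (y - 1)) / (t * (y - x)) := by
      field_simp
    rw [heq]
    rcases mul_pos_iff.mp hprod with ⟨h1, h2⟩ | ⟨h1, h2⟩
    · exact div_pos h1 h2
    · exact div_pos_of_neg_of_neg h1 h2
  have hinv : (1 / x) ^ t = y⁻¹ := by rw [one_div, Real.inv_rpow hx.le]
  have hyx' : y - x ≠ 0 := sub_ne_zero.mpr hyx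
  have hxy : x - y ≠ 0 := sub_ne_zero.mpr (Ne.symm hyx)
  have h1x : 1 - x ≠ 0 := sub_ne_zero.mpr (Ne.symm hx1)
  have h1y : 1 - y ≠ 0 := sub_ne_zero.mpr (Ne.symm hy1)
  have hd : y⁻¹ - 1 / x ≠ 0 := by
    have h : y⁻¹ - 1 / x = (x - y) / (x * y) := by
      rw [eq_div_iff (by positivity : x * y ≠ 0)]
      field_simp
    rw [h]
    exact div_ne_zero hxy (by positivity)
  unfold K
  rw [hinv]
  have hbase : (t - 1) / t * ((y⁻¹ - 1) / (y⁻¹ - 1 / x)) = x * ((t - 1) / t * ((y - 1) / (y - x))) := by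
    field_simp
    ring
  rw [hbase, Real.mul_rpow hx.le hB.le, ← hydef]
  have hfst : (y⁻¹ - 1 / x) / ((t - 1) * (1 / x - 1)) * y = (y - x) / ((t - 1) * (x - 1)) := by
    have hx1' : x - 1 ≠ 0 := sub_ne_zero.mpr hx1
    field_simp
    ring
  calc (y⁻¹ - 1 / x) / ((t - 1) * (1 / x - 1)) * (y * ((t - 1) / t * ((y - 1) / (y - x))) ^ t)
      = ((y⁻¹ - 1 / x) / ((t - 1) * (1 / x - 1)) * y) * ((t - 1) / t * ((y - 1) / (y - x))) ^ t := by ring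
    _ = (y - x) / ((t - 1) * (x - 1)) * ((t - 1) / t * ((y - 1) / (y - x))) ^ t := by rw [hfst]
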